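/- For the function ū(x; M, a) = exp(xᵀMx)·φ(aᵀx) where φ = sigmoid and d = 1: the functions x ↦ ū(x; M, a), x ↦ ∂ū/∂a(x; M, a), and x ↦ ∂ū/∂M(x; M, a) are linearly independent as functions of x ∈ ℝ, for any fixed M ∈ ℝ and a ≠ 0. -/

import Mathlib

open Real

/-- The standard sigmoid `t ↦ 1/(1+e^{−t})`. -/
noncomputable def sigmoid (t : ℝ) : ℝ := 1 / (1 + Real.exp (-t))

/-- Derivative of the sigmoid, `sigmoid'(t) = e^{−t}/(1+e^{−t})²`. -/
noncomputable def sigmoid' (t : ℝ) : ℝ := Real.exp (-t) / (1 + Real.exp (-t)) ^ 2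

/-- In dimension one with sigmoid activation, the expert function
`ū(x; M, a) = e^{Mx²}·sigmoid(ax)` and its partial derivatives in `a` and `M`,
namely `x·e^{Mx²}·sigmoid'(ax)` and `x²·e^{Mx²}·sigmoid(ax)`, are linearly
independent functions of `x` whenever `a ≠ 0`. -/
theorem sigmoid_expert_derivatives_linearIndependent
    (M a : ℝ) (ha : a ≠ 0) (c₁ c₂ c₃ : ℝ)
    (h : ∀ x : ℝ,
        c₁ * (Real.exp (M * x ^ 2) * _root_.sigmoid (a * x))
          + c₂ * (Real.exp (M * x ^ 2) * x * sigmoid' (a * x))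
          + c₃ * (x ^ 2 * Real.exp (M * x ^ 2) * _root_.sigmoid (a * x)) = 0) :
    c₁ = 0 ∧ c₂ = 0 ∧ c₃ = 0 := by
  have hc1 : c₁ = 0 := by
    have h0 := h 0
    simp [_root_.sigmoid] at h0
    linarith
  have key : ∀ x : ℝ, x ≠ 0 →
      c₂ * sigmoid' (a * x) + c₃ * (x * _root_.sigmoid (a * x)) = 0 := by
    intro x hx
    have hx' := h x
    rw [hc1] at hx'
    have h2 : Real.exp (M * x ^ 2) * x *
        (c₂ * sigmoid' (a * x) + c₃ * (x * _root_.sigmoid (a * x))) = 0 := by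
      linear_combination hx'
    rcases mul_eq_zero.mp h2 with h' | h'
    · exact absurd h' (mul_ne_zero (Real.exp_ne_zero _) hx)
    · exact h'
  have k1 := key (1 / a) (one_div_ne_zero ha)
  have k2 := key (-(1 / a)) (neg_ne_zero.mpr (one_div_ne_zero ha))
  rw [mul_one_div_cancel ha] at k1
  have ha2 : a * -(1 / a) = -1 := by field_simp
  rw [ha2] at k2
  have he : Real.exp (-(1:ℝ)) = (Real.exp 1)⁻¹ := by
    rw [Real.exp_neg]
  have hE : 0 < Real.exp 1 := Real.exp_pos 1
  simp only [_root_.sigmoid, sigmoid', neg_neg, he] at k1 k2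
  have h1E : (1 : ℝ) + (Real.exp 1)⁻¹ ≠ 0 := by positivity
  have h2E : (1 : ℝ) + Real.exp 1 ≠ 0 := by positivity
  have hEne : Real.exp 1 ≠ 0 := ne_of_gt hE
  field_simp at k1 k2
  have hr2 : Real.exp 2 = Real.exp 1 * Real.exp 1 := by
    rw [← Real.exp_add]; norm_num
  have h3 : c₃ * (Real.exp 1 * (1 + Real.exp 1) ^ 3) = 0 := by
    linear_combination (Real.exp 1 * (1 + Real.exp 1)) * (k1 - k2)
  have hpos : (0:ℝ) < Real.exp 1 * (1 + Real.exp 1) ^ 3 := by positivity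
  have hc3 : c₃ = 0 := by
    rcases mul_eq_zero.mp h3 with h' | h'
    · exact h'
    · exact absurd h' (ne_of_gt hpos)
  have hc2 : c₂ = 0 := by
    rw [hc3] at k2
    have h4 : c₂ * (Real.exp 1 * (a * (1 + Real.exp 1))) = 0 := by
      linear_combination (1 + Real.exp 1) * k2
    rcases mul_eq_zero.mp h4 with h' | h'
    · exact h'
    · exact absurd h' (by positivity)
  exact ⟨hc1, hc2, hc3⟩
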